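/- Define on (0, T] the wireless-power function P(t) = (1/(h·η·T₀))·[(t/h)·f((T−t)/(R·β·t)) + α·(T−t)/β]. Then P is strictly decreasing on (0, T], P(T) = 0, and P(t) > 0 for every t ∈ (0, T). -/

import Mathlib

open Real Set

private lemma exp_aux (x δ : ℝ) (hδ : 0 ≤ δ) : Real.exp (x - δ) * (1 - x) ≤ 1 := by
  rcases le_or_gt (1 - x) 0 with hc | hc
  · nlinarith [Real.exp_pos (x - δ)]
  · have h1 : Real.exp (x - δ) ≤ Real.exp x := Real.exp_le_exp.mpr (by linarith)
    have h2 : 1 - x ≤ Real.exp (-x) := by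
      have := Real.add_one_le_exp (-x); linarith
    calc Real.exp (x - δ) * (1 - x) ≤ Real.exp x * Real.exp (-x) :=
          mul_le_mul h1 h2 hc.le (Real.exp_pos x).le
      _ = 1 := by rw [← Real.exp_add]; simp

/-- The wireless-power function
`P(t) = (1/(h η T₀)) [(t/h) f((T−t)/(R β t)) + α (T−t)/β]`, with
`f(x) = N₀(2^{x/B}−1)`, is strictly decreasing on `(0, T]`, vanishes at `T`,
and is strictly positive on `(0, T)`. -/
theorem wireless_power_decreasing
    (N0 B h η T0 R β α T : ℝ)
    (hN0 : 0 < N0) (hB : 0 < B) (hh : 0 < h) (hη : 0 < η) (hT0 : 0 < T0)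
    (hR : 0 < R) (hβ : 0 < β) (hα : 0 < α) (hT : 0 < T)
    (P : ℝ → ℝ)
    (hP : ∀ t, P t =
      (1 / (h * η * T0)) *
        ((t / h) * (N0 * ((2 : ℝ) ^ ((T - t) / (R * β * t) / B) - 1))
          + α * (T - t) / β)) :
    StrictAntiOn P (Ioc 0 T) ∧ P T = 0 ∧ ∀ t ∈ Ioo 0 T, 0 < P t := by
  have hc1 : 0 < 1 / (h * η * T0) := by positivity
  have hPf : P = fun t =>
      (1 / (h * η * T0)) *
        ((t / h) * (N0 * (Real.exp (Real.log 2 * ((T - t) / (R * β * t) / B)) - 1))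
          + α * (T - t) / β) := by
    funext t
    rw [hP t, Real.rpow_def_of_pos (by norm_num : (0:ℝ) < 2)]
  refine ⟨?_, ?_, ?_⟩
  · -- strictly decreasing
    rw [hPf]
    apply strictAntiOn_of_deriv_neg (convex_Ioc 0 T)
    · -- continuity
      apply ContinuousOn.mul continuousOn_const
      apply ContinuousOn.add
      · apply ContinuousOn.mul (continuousOn_id.div_const h)
        apply ContinuousOn.mul continuousOn_const
        apply ContinuousOn.sub _ continuousOn_const
        apply Real.continuous_exp.comp_continuousOn
        apply ContinuousOn.mul continuousOn_const
        apply ContinuousOn.div_const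
        apply ContinuousOn.div (by fun_prop) (by fun_prop)
        intro x hx
        have hx0 : 0 < x := hx.1
        positivity
      · fun_prop
    · rw [interior_Ioc]
      intro t ht
      have ht0 : 0 < t := ht.1
      have hden : R * β * t ≠ 0 := by positivity
      -- derivative pieces
      have d1 : HasDerivAt (fun s : ℝ => T - s) (-1) t := by
        simpa using (hasDerivAt_id t).const_sub T
      have d2 : HasDerivAt (fun s : ℝ => R * β * s) (R * β) t := by
        simpa using (hasDerivAt_id t).const_mul (R * β)
      have d3 : HasDerivAt (fun s : ℝ => (T - s) / (R * β * s))
          (((-1) * (R * β * t) - (T - t) * (R * β)) / (R * β * t) ^ 2) t :=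
        d1.div d2 hden
      have d4 := (d3.div_const B).const_mul (Real.log 2)
      have d5 := d4.exp
      have d6 := ((d5.sub_const 1).const_mul N0)
      have d0 : HasDerivAt (fun s : ℝ => s / h) (1 / h) t := by
        simpa using (hasDerivAt_id t).div_const h
      have d7 := d0.mul d6
      have d8 := ((d1.const_mul α).div_const β)
      have d9 := ((d7.add d8).const_mul (1 / (h * η * T0)))
      simp only [Pi.mul_apply, Pi.add_apply] at d9
      rw [d9.deriv]
      -- now show the derivative value is negative
      set E := Real.exp (Real.log 2 * ((T - t) / (R * β * t) / B)) with hE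
      have hEpos : 0 < E := Real.exp_pos _
      set X := Real.log 2 * T / (R * β * B * t) with hX
      have hkey : E * (1 - X) ≤ 1 := by
        have hexp : Real.log 2 * ((T - t) / (R * β * t) / B)
            = X - Real.log 2 / (R * β * B) := by
          rw [hX]; field_simp
        rw [hE, hexp]
        exact exp_aux _ _ (by positivity)
      have hts : t * (Real.log 2 * (((-1) * (R * β * t) - (T - t) * (R * β)) / (R * β * t) ^ 2 / B))
          = -X := by
        rw [hX]; field_simp; ring
      apply mul_neg_of_pos_of_neg hc1
      have hrw : 1 / h * (N0 * (E - 1)) + t / h * (N0 * (E * (Real.log 2 * ((((-1) * (R * β * t) - (T - t) * (R * β)) / (R * β * t) ^ 2) / B))) ) + α * (-1) / β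
          = (N0 / h) * (E * (1 - X) - 1) - α / β := by
        have : t / h * (N0 * (E * (Real.log 2 * ((((-1) * (R * β * t) - (T - t) * (R * β)) / (R * β * t) ^ 2) / B))))
            = (N0 / h) * (E * (t * (Real.log 2 * (((-1) * (R * β * t) - (T - t) * (R * β)) / (R * β * t) ^ 2 / B)))) := by
          ring
        rw [this, hts]; ring
      calc 1 / h * (N0 * (E - 1)) + t / h * (N0 * (E * (Real.log 2 * ((((-1) * (R * β * t) - (T - t) * (R * β)) / (R * β * t) ^ 2) / B)))) + α * (-1) / β
          = (N0 / h) * (E * (1 - X) - 1) - α / β := hrw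
        _ ≤ 0 - α / β := by
            have h1 : (N0 / h) * (E * (1 - X) - 1) ≤ 0 := by
              apply mul_nonpos_of_nonneg_of_nonpos (by positivity)
              linarith
            linarith
        _ < 0 := by
            have : 0 < α / β := by positivity
            linarith
  · -- P T = 0
    rw [hP]; norm_num
  · -- positivity
    intro t ht
    rw [hP]
    have hts : 0 < T - t := by linarith [ht.2]
    have hexp : 0 < (T - t) / (R * β * t) / B := by
      have := ht.1; positivity
    have h2 : 1 < (2 : ℝ) ^ ((T - t) / (R * β * t) / B) :=
      Real.one_lt_rpow_iff_of_pos (by norm_num) |>.mpr (Or.inl ⟨by norm_num, hexp⟩)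
    apply mul_pos hc1
    apply add_pos
    · exact mul_pos (div_pos ht.1 hh) (mul_pos hN0 (sub_pos.mpr h2))
    · exact div_pos (mul_pos hα hts) hβ
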